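/- arXiv:1902.06143 — 2 statements merged into one kernel-verified Lean document; each statement's English description precedes it below -/
import Mathlib

section
/- Let W be a real symmetric n×n matrix with exactly two distinct eigenvalues, and let X be any real n×k matrix. Then the n×3k block matrix [WX | W²X | X] has rank at most 2k; in particular, if k ≥ 1 it does not have full column rank. -/
open Matrix

/-- If a real symmetric `n × n` matrix `W` has exactly two distinct eigenvalues
`τ₁ ≠ τ₂` and `X` is any real `n × k` matrix, then the block matrix
`[WX | W²X | X]` has rank at most `2 * k`; in particular, when `k ≥ 1` it fails
to have full column rank `3 * k`. -/
theorem stmt3 {n k : ℕ} (W : Matrix (Fin n) (Fin n) ℝ) (hW : W.IsSymm)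
    (τ₁ τ₂ : ℝ) (hτ : τ₁ ≠ τ₂) (hspec : spectrum ℝ W = {τ₁, τ₂})
    (X : Matrix (Fin n) (Fin k) ℝ) :
    (Matrix.fromCols (Matrix.fromCols (W * X) (W ^ 2 * X)) X).rank ≤ 2 * k ∧
      (1 ≤ k →
        (Matrix.fromCols (Matrix.fromCols (W * X) (W ^ 2 * X)) X).rank ≠ 3 * k) := by
  have hH : W.IsHermitian := by
    rw [Matrix.IsHermitian]
    ext i j
    simpa using congrFun (congrFun hW i) j
  set d := hH.eigenvalues with hd
  set U : Matrix (Fin n) (Fin n) ℝ := (hH.eigenvectorUnitary : Matrix (Fin n) (Fin n) ℝ) with hU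
  have hUU : U * star U = 1 := Matrix.mem_unitaryGroup_iff.mp hH.eigenvectorUnitary.2
  have hUU' : star U * U = 1 := Matrix.mem_unitaryGroup_iff'.mp hH.eigenvectorUnitary.2
  have hs : W = U * Matrix.diagonal d * star U := by
    have := hH.spectral_theorem
    simpa using this
  have h1 : ∀ τ : ℝ, W - τ • 1 = U * Matrix.diagonal (fun i => d i - τ) * star U := by
    intro τ
    have hdiag : Matrix.diagonal (fun i => d i - τ) = Matrix.diagonal d - τ • 1 := by
      ext i j
      by_cases h : i = j <;> simp [Matrix.diagonal, h, Matrix.one_apply]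
    rw [hdiag, Matrix.mul_sub, Matrix.sub_mul, Matrix.mul_smul, Matrix.mul_one,
      Matrix.smul_mul, hUU, ← hs]
  have key : (W - τ₁ • 1) * (W - τ₂ • 1) = 0 := by
    rw [h1 τ₁, h1 τ₂]
    have : Matrix.diagonal (fun i => d i - τ₁) * Matrix.diagonal (fun i => d i - τ₂) = 0 := by
      rw [Matrix.diagonal_mul_diagonal]
      have : (fun i => (d i - τ₁) * (d i - τ₂)) = fun _ => (0:ℝ) := by
        funext i
        have hmem : d i ∈ spectrum ℝ W := hH.eigenvalues_mem_spectrum_real i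
        rw [hspec] at hmem
        simp only [Set.mem_insert_iff, Set.mem_singleton_iff] at hmem
        rcases hmem with h | h <;> rw [h] <;> ring
      rw [this, Matrix.diagonal_zero]
    calc U * Matrix.diagonal (fun i => d i - τ₁) * star U *
          (U * Matrix.diagonal (fun i => d i - τ₂) * star U)
        = U * Matrix.diagonal (fun i => d i - τ₁) * (star U * U) *
          Matrix.diagonal (fun i => d i - τ₂) * star U := by noncomm_ring
      _ = 0 := by
          rw [hUU', Matrix.mul_one, Matrix.mul_assoc U _ _, this, Matrix.mul_zero,
            Matrix.zero_mul]
  have hW2 : W ^ 2 = (τ₁ + τ₂) • W - (τ₁ * τ₂) • 1 := by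
    have h := key
    simp only [Matrix.sub_mul, Matrix.mul_sub, smul_mul_assoc, mul_smul_comm, one_mul,
      mul_one, smul_smul, sub_eq_zero] at h
    have hWW : W * W = (τ₁ • W - (τ₁ * τ₂) • 1) + τ₂ • W := by
      rw [sub_eq_iff_eq_add] at h
      rw [h]; module
    rw [pow_two, hWW]
    module
  have hcol : W ^ 2 * X = (τ₁ + τ₂) • (W * X) + (-(τ₁ * τ₂)) • X := by
    rw [hW2, Matrix.sub_mul, Matrix.smul_mul, Matrix.smul_mul, Matrix.one_mul]
    module
  set A := Matrix.fromCols (W * X) X with hA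
  set B : Matrix (Fin k ⊕ Fin k) ((Fin k ⊕ Fin k) ⊕ Fin k) ℝ :=
    Matrix.fromCols
      (Matrix.fromCols (Matrix.fromRows 1 0)
        (Matrix.fromRows ((τ₁ + τ₂) • 1) ((-(τ₁ * τ₂)) • 1)))
      (Matrix.fromRows 0 1) with hB
  have hfac : Matrix.fromCols (Matrix.fromCols (W * X) (W ^ 2 * X)) X = A * B := by
    rw [hB, hA, Matrix.mul_fromCols, Matrix.mul_fromCols,
      Matrix.fromCols_mul_fromRows, Matrix.fromCols_mul_fromRows,
      Matrix.fromCols_mul_fromRows]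
    simp [hcol, Matrix.mul_smul]
  have hrank : (Matrix.fromCols (Matrix.fromCols (W * X) (W ^ 2 * X)) X).rank ≤ 2 * k := by
    rw [hfac]
    calc (A * B).rank ≤ A.rank := Matrix.rank_mul_le_left A B
      _ ≤ Fintype.card (Fin k ⊕ Fin k) := Matrix.rank_le_card_width A
      _ = 2 * k := by simp [Fintype.card_sum]; ring
  exact ⟨hrank, fun hk h => by omega⟩
end

section
/- Let m ≥ 2 be an integer, W = W_m = (1/(m−1))(ιι^T − I), J = I − (1/m)ιι^T, and let λ, β₁, β₂, γ be real numbers with I − λW invertible. Suppose the vectors Y, X₁, X₂, ε ∈ ℝ^m satisfy the structural equation Y = λ·W·Y + β₁·X₁ + β₂·W·X₂ + γ·ι + ε. Then the within-transformed reduced form holds: J·Y = ((m−1)β₁/(m−1+λ))·J·X₁ − (β₂/(m−1+λ))·J·X₂ + ((m−1)/(m−1+λ))·J·ε. -/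
open Matrix

/-- The group-interaction matrix `W_m = (1/(m-1))(ιιᵀ - I)`. -/
noncomputable def groupMat (m : ℕ) : Matrix (Fin m) (Fin m) ℝ :=
  Matrix.of fun i j => if i = j then 0 else 1 / ((m : ℝ) - 1)

/-- The deviation-from-group-mean projector `J_m = I - (1/m) ιιᵀ`. -/
noncomputable def groupProj (m : ℕ) : Matrix (Fin m) (Fin m) ℝ :=
  1 - ((m : ℝ))⁻¹ • Matrix.of (fun _ _ => (1 : ℝ))

lemma groupMat_mulVec (m : ℕ) (v : Fin m → ℝ) (i : Fin m) :
    (groupMat m *ᵥ v) i = ((∑ j, v j) - v i) / ((m : ℝ) - 1) := by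
  simp only [groupMat, mulVec, dotProduct, of_apply]
  rw [Finset.sum_congr rfl (fun j _ => show (if i = j then 0 else 1/((m:ℝ)-1)) * v j
    = v j / ((m:ℝ)-1) - (if i = j then v j / ((m:ℝ)-1) else 0) by split <;> ring)]
  rw [Finset.sum_sub_distrib, Finset.sum_ite_eq, if_pos (Finset.mem_univ i),
    ← Finset.sum_div]
  ring

lemma groupProj_mulVec (m : ℕ) (v : Fin m → ℝ) (i : Fin m) :
    (groupProj m *ᵥ v) i = v i - (∑ j, v j) / m := by
  rw [groupProj, sub_mulVec, one_mulVec, Matrix.smul_mulVec]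
  simp only [Pi.sub_apply, Pi.smul_apply, smul_eq_mul]
  have : (Matrix.of (fun _ _ => (1:ℝ)) *ᵥ v) i = ∑ j, v j := by
    simp [mulVec, dotProduct]
  rw [this]
  ring

/-- If `Y = λ W Y + β₁ X₁ + β₂ W X₂ + γ ι + ε` in a group of size `m ≥ 2` with
`I - λ W` invertible, then the within-transformed reduced form holds:
`J Y = ((m-1)β₁/(m-1+λ)) J X₁ - (β₂/(m-1+λ)) J X₂ + ((m-1)/(m-1+λ)) J ε`. -/
theorem stmt9 {m : ℕ} (hm : 2 ≤ m) (lam β₁ β₂ γ : ℝ)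
    (hinv : IsUnit (1 - lam • groupMat m))
    (Y X₁ X₂ ε : Fin m → ℝ)
    (hstruct : Y = lam • (groupMat m *ᵥ Y) + β₁ • X₁ +
      β₂ • (groupMat m *ᵥ X₂) + γ • (fun _ => (1 : ℝ)) + ε) :
    groupProj m *ᵥ Y =
      (((m : ℝ) - 1) * β₁ / ((m : ℝ) - 1 + lam)) • (groupProj m *ᵥ X₁) -
        (β₂ / ((m : ℝ) - 1 + lam)) • (groupProj m *ᵥ X₂) +
        (((m : ℝ) - 1) / ((m : ℝ) - 1 + lam)) • (groupProj m *ᵥ ε) := by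
  have hm1 : (1:ℝ) ≤ (m:ℝ) - 1 := by
    have : (2:ℝ) ≤ m := by exact_mod_cast hm
    linarith
  have hc : ((m:ℝ) - 1) ≠ 0 := by linarith
  -- denominator nonzero
  have hd : ((m:ℝ) - 1 + lam) ≠ 0 := by
    intro h
    have hlam : lam = -((m:ℝ) - 1) := by linarith
    -- test vector
    have hm0 : 0 < m := by omega
    have hm1' : 1 < m := by omega
    set v : Fin m → ℝ := fun j => if j = ⟨0, hm0⟩ then 1 else if j = ⟨1, hm1'⟩ then -1 else 0 with hv
    have h01 : (⟨0, hm0⟩ : Fin m) ≠ (⟨1, hm1'⟩ : Fin m) := by simp [Fin.ext_iff]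
    have hsum : ∑ j, v j = 0 := by
      have heq : ∀ j ∈ Finset.univ, v j = (if j = (⟨0,hm0⟩ : Fin m) then (1:ℝ) else 0)
          + (if j = (⟨1,hm1'⟩ : Fin m) then (-1:ℝ) else 0) := by
        intro j _
        rw [hv]
        by_cases h1 : j = (⟨0,hm0⟩ : Fin m) <;> by_cases h2 : j = (⟨1,hm1'⟩ : Fin m) <;>
          simp_all
      rw [Finset.sum_congr rfl heq, Finset.sum_add_distrib,
        Finset.sum_ite_eq' Finset.univ, Finset.sum_ite_eq' Finset.univ]
      simp
    have hWv : groupMat m *ᵥ v = (-(1/((m:ℝ)-1))) • v := by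
      funext i
      rw [groupMat_mulVec, hsum]
      simp; ring
    have hker : (1 - lam • groupMat m) *ᵥ v = 0 := by
      rw [sub_mulVec, one_mulVec, smul_mulVec, hWv]
      funext i
      simp only [Pi.sub_apply, Pi.smul_apply, smul_eq_mul, Pi.zero_apply]
      field_simp [hlam]
      rw [hlam]; ring
    have hinj := (Matrix.mulVec_injective_iff_isUnit).2 hinv
    have : v = 0 := by
      have := hinj (by rw [hker, Matrix.mulVec_zero] : (1 - lam • groupMat m) *ᵥ v = (1 - lam • groupMat m) *ᵥ 0)
      exact this
    have : v ⟨0, hm0⟩ = 0 := by rw [this]; rfl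
    simp [hv] at this
  -- apply J to the structural equation
  have h1 : groupProj m *ᵥ (fun _ => (1:ℝ)) = 0 := by
    funext i
    rw [groupProj_mulVec]
    simp
    field_simp
    norm_num
  have key : ∀ (v : Fin m → ℝ), groupProj m *ᵥ (groupMat m *ᵥ v)
      = (-(1/((m:ℝ)-1))) • (groupProj m *ᵥ v) := by
    intro v
    funext i
    rw [Pi.smul_apply, groupProj_mulVec, groupMat_mulVec,
      Finset.sum_congr rfl (fun j _ => groupMat_mulVec m v j), groupProj_mulVec]
    set S := ∑ j, v j with hS
    rw [Finset.sum_congr rfl (fun j _ => show (S - v j)/((m:ℝ)-1)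
      = S/((m:ℝ)-1) - v j * (1/((m:ℝ)-1)) by ring)]
    rw [Finset.sum_sub_distrib, ← Finset.sum_mul, ← hS]
    simp only [Finset.sum_const, Finset.card_univ, Fintype.card_fin, nsmul_eq_mul,
      smul_eq_mul]
    have hm0 : ((m:ℝ)) ≠ 0 := by linarith
    field_simp
    ring
  have hJ := congrArg (fun w => groupProj m *ᵥ w) hstruct
  simp only [mulVec_add, mulVec_smul, key, h1, smul_zero, add_zero] at hJ
  -- now solve pointwise
  funext i
  have hJi := congrFun hJ i
  simp only [Pi.add_apply, Pi.smul_apply, Pi.sub_apply, smul_eq_mul] at hJi ⊢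
  field_simp at hJi ⊢
  linarith [hJi]
end
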